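/- Let 1 ≤ k ≤ 5 and let w_0, …, w_s ∈ H_k be pairwise ω-orthogonal vectors with gcd(w_0,…,w_s) = 1, where s ≤ g − k − 1. Then there exist vectors x_1, …, x_{g−2−s} ∈ H such that x_j = a_j for 1 ≤ j ≤ k−1, x_j ∈ H_{k+1} for k ≤ j ≤ g−2−s, and the combined family (w_0, …, w_s, x_1, …, x_{g−2−s}) is pairwise ω-orthogonal with gcd(w_0,…,w_s,x_1,…,x_{g−2−s}) = 1 (in particular it is a basis of an isotropic direct summand of H of rank g−1, and each x_j is primitive). -/

import Mathlib

namespace Paper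

/-- The standard symplectic form on `R^{2g}` with respect to the basis
`a_1, b_1, …, a_g, b_g` (coordinates `2i, 2i+1` for `a_{i+1}, b_{i+1}`). -/
def symp {R : Type*} [CommRing R] {g : ℕ} (x y : Fin (2 * g) → R) : R :=
  ∑ i : Fin g,
    (x ⟨2 * i.1, by omega⟩ * y ⟨2 * i.1 + 1, by omega⟩ -
      x ⟨2 * i.1 + 1, by omega⟩ * y ⟨2 * i.1, by omega⟩)

theorem symp_add_left {R : Type*} [CommRing R] {g : ℕ} (x y a : Fin (2 * g) → R) :
    symp (x + y) a = symp x a + symp y a := by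
  unfold symp
  rw [← Finset.sum_add_distrib]
  exact Finset.sum_congr rfl fun i _ => by simp only [Pi.add_apply]; ring

theorem symp_smul_left {R : Type*} [CommRing R] {g : ℕ} (c : R) (x a : Fin (2 * g) → R) :
    symp (c • x) a = c * symp x a := by
  unfold symp
  rw [Finset.mul_sum]
  exact Finset.sum_congr rfl fun i _ => by simp only [Pi.smul_apply, smul_eq_mul]; ring

theorem symp_zero_left {R : Type*} [CommRing R] {g : ℕ} (a : Fin (2 * g) → R) :
    symp (0 : Fin (2 * g) → R) a = 0 := by
  unfold symp; simp

/-- The orthogonal complement `A^⊥ = {x | ω(x,a) = 0 for all a ∈ A}`. -/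
def perp {R : Type*} [CommRing R] {g : ℕ} (A : Set (Fin (2 * g) → R)) :
    Submodule R (Fin (2 * g) → R) where
  carrier := {x | ∀ a ∈ A, symp x a = 0}
  add_mem' := by
    intro x y hx hy a ha
    rw [symp_add_left, hx a ha, hy a ha, add_zero]
  zero_mem' := by
    intro a ha
    exact symp_zero_left a
  smul_mem' := by
    intro c x hx a ha
    rw [symp_smul_left, hx a ha, mul_zero]

/-- The submodule of vectors whose first `m` coordinates vanish.
`H_k = coordZero R (2*g) (2*(k-1))`, and `H₂ = coordZero R (2*(g+1)) 2`. -/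
def coordZero (R : Type*) [CommRing R] (n m : ℕ) : Submodule R (Fin n → R) where
  carrier := {v | ∀ j : Fin n, (j : ℕ) < m → v j = 0}
  add_mem' := by
    intro x y hx hy j hj
    have h1 := hx j hj
    have h2 := hy j hj
    simp [Pi.add_apply, h1, h2]
  zero_mem' := by intro j hj; rfl
  smul_mem' := by
    intro c x hx j hj
    have h1 := hx j hj
    simp [Pi.smul_apply, h1]

/-- The standard basis vector `a_{i+1}` (`i` is 0-indexed). -/
def stdA (R : Type*) [CommRing R] (g i : ℕ) : Fin (2 * g) → R :=
  fun j => if (j : ℕ) = 2 * i then 1 else 0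

/-- The standard basis vector `b_{i+1}` (`i` is 0-indexed). -/
def stdB (R : Type*) [CommRing R] (g i : ℕ) : Fin (2 * g) → R :=
  fun j => if (j : ℕ) = 2 * i + 1 then 1 else 0

/-- Regard an integer vector as a rational vector. -/
def qcast {n : ℕ} (v : Fin n → ℤ) : Fin n → ℚ := fun j => (v j : ℚ)

/-- The projection `pr₂` deleting the `a_1`- and `b_1`-coordinates. -/
def pr2 {R : Type*} [CommRing R] {n : ℕ} (v : Fin n → R) : Fin n → R :=
  fun j => if (j : ℕ) < 2 then 0 else v j

/-- `gcd(v_1, …, v_m) = 1`: the vectors are linearly independent and their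
ℤ-span is a direct summand. -/
def IsUnimodular {n m : ℕ} (v : Fin m → Fin n → ℤ) : Prop :=
  LinearIndependent ℤ v ∧
    ∃ C : Submodule ℤ (Fin n → ℤ), IsCompl (Submodule.span ℤ (Set.range v)) C

/-- A primitive vector. -/
def Primitive {n : ℕ} (v : Fin n → ℤ) : Prop := IsUnimodular ![v]

/-- The entries of `w` are pairwise `ω`-orthogonal. -/
def PairwiseOrth {g m : ℕ} (w : Fin m → Fin (2 * g) → ℤ) : Prop :=
  ∀ i j, i ≠ j → symp (w i) (w j) = 0

/-- `Λ³ W`: the span of all wedges of three vectors from `W` inside the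
exterior algebra. -/
def wedge3 {g : ℕ} (W : Submodule ℚ (Fin (2 * g) → ℚ)) :
    Submodule ℚ (ExteriorAlgebra ℚ (Fin (2 * g) → ℚ)) :=
  Submodule.span ℚ {x | ∃ z₁ ∈ W, ∃ z₂ ∈ W, ∃ z₃ ∈ W,
    x = ExteriorAlgebra.ι ℚ z₁ * ExteriorAlgebra.ι ℚ z₂ * ExteriorAlgebra.ι ℚ z₃}

/-- `u ∧ Λ² W`. -/
def uWedge2 {g : ℕ} (u : Fin (2 * g) → ℚ) (W : Submodule ℚ (Fin (2 * g) → ℚ)) :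
    Submodule ℚ (ExteriorAlgebra ℚ (Fin (2 * g) → ℚ)) :=
  Submodule.span ℚ {x | ∃ z₁ ∈ W, ∃ z₂ ∈ W,
    x = ExteriorAlgebra.ι ℚ u * ExteriorAlgebra.ι ℚ z₁ * ExteriorAlgebra.ι ℚ z₂}

/-- `u ∧ u' ∧ W`. -/
def uuWedge1 {g : ℕ} (u u' : Fin (2 * g) → ℚ) (W : Submodule ℚ (Fin (2 * g) → ℚ)) :
    Submodule ℚ (ExteriorAlgebra ℚ (Fin (2 * g) → ℚ)) :=
  Submodule.span ℚ {x | ∃ z ∈ W,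
    x = ExteriorAlgebra.ι ℚ u * ExteriorAlgebra.ι ℚ u' * ExteriorAlgebra.ι ℚ z}

/-- The simplicial differential: on the summand indexed by `w` it sends `z` to
`Σ_j (-1)^j · z` placed in the summand indexed by `∂_j w`. -/
noncomputable def diff (g p : ℕ)
    (ξ : (Fin (p + 1) → Fin (2 * g) → ℤ) →₀ ExteriorAlgebra ℚ (Fin (2 * g) → ℚ)) :
    (Fin p → Fin (2 * g) → ℤ) →₀ ExteriorAlgebra ℚ (Fin (2 * g) → ℚ) :=
  ξ.sum fun w z =>
    ∑ j : Fin (p + 1), ((-1 : ℚ) ^ (j : ℕ)) • Finsupp.single (fun i => w (j.succAbove i)) z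

/-- The gcd of the determinants of all maximal square submatrices of the matrix
whose columns are the `v i`. -/
def vgcd {ι : Type*} [Fintype ι] {m : ℕ} (v : Fin m → ι → ℤ) : ℕ :=
  Finset.univ.gcd fun r : Fin m → ι => (Matrix.det (Matrix.of fun i j => v j (r i))).natAbs

open Module

theorem symp_neg_swap {R : Type*} [CommRing R] {g : ℕ} (x y : Fin (2 * g) → R) :
    symp x y = - symp y x := by
  unfold symp
  rw [← Finset.sum_neg_distrib]
  exact Finset.sum_congr rfl fun i _ => by ring

theorem symp_self {R : Type*} [CommRing R] {g : ℕ} (x : Fin (2 * g) → R) :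
    symp x x = 0 := by
  unfold symp; apply Finset.sum_eq_zero; intro i _; ring

theorem symp_add_right {R : Type*} [CommRing R] {g : ℕ} (a x y : Fin (2 * g) → R) :
    symp a (x + y) = symp a x + symp a y := by
  unfold symp
  rw [← Finset.sum_add_distrib]
  exact Finset.sum_congr rfl fun i _ => by simp only [Pi.add_apply]; ring

theorem symp_smul_right {R : Type*} [CommRing R] {g : ℕ} (c : R) (a x : Fin (2 * g) → R) :
    symp a (c • x) = c * symp a x := by
  unfold symp
  rw [Finset.mul_sum]
  exact Finset.sum_congr rfl fun i _ => by simp only [Pi.smul_apply, smul_eq_mul]; ring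

theorem symp_qcast {g : ℕ} (x y : Fin (2 * g) → ℤ) :
    symp (qcast x) (qcast y) = ((symp x y : ℤ) : ℚ) := by
  unfold symp qcast
  push_cast
  rfl

theorem symp_stdA_left {R : Type*} [CommRing R] {g : ℕ} (l : ℕ) (hl : l < g)
    (x : Fin (2 * g) → R) : symp (stdA R g l) x = x ⟨2 * l + 1, by omega⟩ := by
  unfold symp stdA
  rw [Finset.sum_eq_single ⟨l, hl⟩]
  · simp
  · intro i _ hi
    have hil : i.1 ≠ l := fun h => hi (Fin.ext h)
    have h1 : ¬ (2 * i.1 = 2 * l) := by omega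
    have h2 : ¬ (2 * i.1 + 1 = 2 * l) := by omega
    simp [h1, h2]
  · simp

theorem unimodular_of_dual {n m : ℕ} (v : Fin m → Fin n → ℤ)
    (φ : Fin m → ((Fin n → ℤ) →ₗ[ℤ] ℤ))
    (h : ∀ i j, φ i (v j) = if i = j then 1 else 0) : IsUnimodular v := by
  constructor
  · rw [Fintype.linearIndependent_iff]
    intro c hc j
    have := congrArg (φ j) hc
    simp only [map_sum, map_smul, map_zero, smul_eq_mul, h] at this
    simpa using this
  · set f : (Fin n → ℤ) →ₗ[ℤ] (Fin n → ℤ) := ∑ i, (φ i).smulRight (v i) with hf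
    have hfx : ∀ x, f x = ∑ i, φ i x • v i := by
      intro x; rw [hf]; simp [LinearMap.sum_apply]
    have hproj : LinearMap.IsProj (Submodule.span ℤ (Set.range v)) f := by
      constructor
      · intro x
        rw [hfx]
        exact Submodule.sum_mem _ fun i _ =>
          Submodule.smul_mem _ _ (Submodule.subset_span ⟨i, rfl⟩)
      · intro x hx
        induction hx using Submodule.span_induction with
        | mem x hx =>
          obtain ⟨j, rfl⟩ := hx
          rw [hfx]
          simp only [h, ite_smul, one_smul, zero_smul]
          rw [Finset.sum_ite_eq' Finset.univ j (fun i => v i)]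
          simp
        | zero => simp
        | add x y _ _ hx hy => rw [map_add, hx, hy]
        | smul c x _ hx => rw [map_smul, hx]
    exact ⟨LinearMap.ker f, hproj.isCompl⟩

theorem dual_of_unimodular {n m : ℕ} (v : Fin m → Fin n → ℤ)
    (h : IsUnimodular v) :
    ∃ φ : Fin m → ((Fin n → ℤ) →ₗ[ℤ] ℤ),
      ∀ i j, φ i (v j) = if i = j then 1 else 0 := by
  obtain ⟨hli, C, hC⟩ := h
  set p := Submodule.span ℤ (Set.range v)
  set b : Basis (Fin m) ℤ p := Basis.span hli
  set π : (Fin n → ℤ) →ₗ[ℤ] p := p.linearProjOfIsCompl C hC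
  refine ⟨fun i => (b.coord i) ∘ₗ π, fun i j => ?_⟩
  have hvj : (v j) ∈ p := Submodule.subset_span ⟨j, rfl⟩
  have hπ : π (v j) = ⟨v j, hvj⟩ :=
    Submodule.linearProjOfIsCompl_apply_left hC ⟨v j, hvj⟩
  have hbj : (⟨v j, hvj⟩ : p) = b j := by
    apply Subtype.ext
    rw [Basis.span_apply]
  simp only [LinearMap.comp_apply, hπ, hbj, Basis.coord_apply, Basis.repr_self]
  by_cases hij : i = j <;> simp [hij, Finsupp.single_apply, eq_comm]

/-- `symp w ·` as a linear map. -/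
def sympL {g : ℕ} (w : Fin (2 * g) → ℚ) : (Fin (2 * g) → ℚ) →ₗ[ℚ] ℚ where
  toFun y := symp w y
  map_add' x y := symp_add_right w x y
  map_smul' c x := symp_smul_right c w x

@[simp] theorem sympL_apply {g : ℕ} (w y : Fin (2 * g) → ℚ) : sympL w y = symp w y := rfl

/-- Kernel of finitely many functionals has codimension at most the number of functionals. -/
theorem finrank_ker_pi {K : Type*} [Field K] {V : Type*} [AddCommGroup V] [Module K V]
    [FiniteDimensional K V] {ι : Type*} [Fintype ι] [DecidableEq ι] (f : ι → (V →ₗ[K] K)) :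
    finrank K V ≤ finrank K (LinearMap.ker (LinearMap.pi f)) + Fintype.card ι := by
  have h := LinearMap.finrank_range_add_finrank_ker (LinearMap.pi f)
  have h2 : finrank K (LinearMap.range (LinearMap.pi f)) ≤ Fintype.card ι := by
    have := Submodule.finrank_le (LinearMap.range (LinearMap.pi f))
    simpa [finrank_pi] using this
  omega

theorem extension_step {g t : ℕ} (V T' : Submodule ℚ (Fin (2 * g) → ℚ))
    (hT'V : T' ≤ V) (hrk : finrank ℚ T' = t)
    (hiso : ∀ x ∈ T', ∀ y ∈ T', symp x y = 0)
    (u : Fin (2 * g) → ℚ) (hu : u ∈ V) (hunot : u ∉ T')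
    (huT' : ∀ z ∈ T', symp u z = 0) :
    ∃ T : Submodule ℚ (Fin (2 * g) → ℚ), T ≤ V ∧ finrank ℚ T = t + 1 ∧
      ∀ x ∈ T, ∀ y ∈ T, symp x y = 0 := by
  have hu0 : u ≠ 0 := fun h => hunot (h ▸ T'.zero_mem)
  refine ⟨T' ⊔ Submodule.span ℚ {u}, ?_, ?_, ?_⟩
  · exact sup_le hT'V ((Submodule.span_singleton_le_iff_mem u V).2 hu)
  · have hinf : T' ⊓ Submodule.span ℚ {u} = ⊥ := by
      rw [Submodule.eq_bot_iff]
      rintro z ⟨hz1, hz2⟩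
      obtain ⟨c, rfl⟩ := Submodule.mem_span_singleton.1 hz2
      rcases eq_or_ne c 0 with rfl | hc
      · simp
      · exfalso
        apply hunot
        have := T'.smul_mem c⁻¹ hz1
        rwa [smul_smul, inv_mul_cancel₀ hc, one_smul] at this
    have := Submodule.finrank_sup_add_finrank_inf_eq T' (Submodule.span ℚ {u})
    rw [hinf, hrk, finrank_span_singleton hu0] at this
    simpa using this
  · intro x hx y hy
    rw [Submodule.mem_sup] at hx hy
    obtain ⟨z1, hz1, w1, hw1, rfl⟩ := hx
    obtain ⟨z2, hz2, w2, hw2, rfl⟩ := hy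
    obtain ⟨c, rfl⟩ := Submodule.mem_span_singleton.1 hw1
    obtain ⟨d, rfl⟩ := Submodule.mem_span_singleton.1 hw2
    have h1 : symp z1 u = 0 := by
      rw [symp_neg_swap, huT' z1 hz1, neg_zero]
    rw [symp_add_left, symp_add_right, symp_add_right, symp_smul_left, symp_smul_left,
      symp_smul_right, symp_smul_right, hiso z1 hz1 z2 hz2, h1, huT' z2 hz2, symp_self]
    ring

theorem exists_isotropic {g : ℕ} (t : ℕ) (V : Submodule ℚ (Fin (2 * g) → ℚ))
    (hrk : 2 * t ≤ finrank ℚ V) :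
    ∃ T : Submodule ℚ (Fin (2 * g) → ℚ), T ≤ V ∧ finrank ℚ T = t ∧
      ∀ x ∈ T, ∀ y ∈ T, symp x y = 0 := by
  induction t generalizing V with
  | zero =>
    refine ⟨⊥, bot_le, finrank_bot ℚ _, ?_⟩
    intro x hx y hy
    rw [Submodule.mem_bot] at hx hy
    subst hx; subst hy
    exact symp_self 0
  | succ t ih =>
    by_cases hiso : ∀ x ∈ V, ∀ y ∈ V, symp x y = 0
    · obtain ⟨T', hT'V, hT'rk, hT'iso⟩ := ih V (by omega)
      have hVn : ¬ (V ≤ T') := by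
        intro hle
        have := Submodule.finrank_mono hle
        omega
      obtain ⟨u, huV, hunot⟩ := SetLike.not_le_iff_exists.1 hVn
      exact extension_step V T' hT'V hT'rk hT'iso u huV hunot
        (fun z hz => hiso u huV z (hT'V hz))
    · push_neg at hiso
      obtain ⟨u, huV, v, hvV, huv⟩ := hiso
      set F : V →ₗ[ℚ] (Fin 2 → ℚ) :=
        LinearMap.pi ![(sympL u).domRestrict V, (sympL v).domRestrict V] with hF
      set K : Submodule ℚ (Fin (2 * g) → ℚ) := (LinearMap.ker F).map V.subtype with hK
      have hKmem : ∀ x, x ∈ K ↔ x ∈ V ∧ symp u x = 0 ∧ symp v x = 0 := by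
        intro x
        constructor
        · rintro ⟨⟨y, hyV⟩, hy, rfl⟩
          refine ⟨hyV, ?_, ?_⟩
          · have := congrFun (LinearMap.mem_ker.1 hy) 0
            simpa [hF] using this
          · have := congrFun (LinearMap.mem_ker.1 hy) 1
            simpa [hF] using this
        · rintro ⟨hxV, h1, h2⟩
          refine ⟨⟨x, hxV⟩, ?_, rfl⟩
          show _ ∈ LinearMap.ker F
          rw [LinearMap.mem_ker]
          funext i
          fin_cases i <;> simpa [hF]
      have hKV : K ≤ V := fun x hx => ((hKmem x).1 hx).1
      have hKrk : 2 * t ≤ finrank ℚ K := by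
        have h1 : finrank ℚ K = finrank ℚ (LinearMap.ker F) :=
          Submodule.finrank_map_subtype_eq V (LinearMap.ker F)
        have h2 := finrank_ker_pi (K := ℚ) (V := V) ![(sympL u).domRestrict V, (sympL v).domRestrict V]
        rw [← hF] at h2
        simp only [Fintype.card_fin] at h2
        omega
      obtain ⟨T', hT'K, hT'rk, hT'iso⟩ := ih K hKrk
      have hunot : u ∉ T' := by
        intro h
        have h0 := ((hKmem u).1 (hT'K h)).2.2
        rw [symp_neg_swap, neg_eq_zero] at h0
        exact huv h0
      exact extension_step V T' (le_trans hT'K hKV) hT'rk hT'iso u huV hunot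
        (fun z hz => ((hKmem z).1 (hT'K hz)).2.1)

/-- Extend an integer functional to a rational one. -/
noncomputable def extendQ {n : ℕ} (φ : (Fin n → ℤ) →ₗ[ℤ] ℤ) : (Fin n → ℚ) →ₗ[ℚ] ℚ :=
  ∑ j : Fin n, ((φ (Pi.single j 1) : ℤ) : ℚ) • (LinearMap.proj j)

theorem extendQ_qcast {n : ℕ} (φ : (Fin n → ℤ) →ₗ[ℤ] ℤ) (z : Fin n → ℤ) :
    extendQ φ (qcast z) = ((φ z : ℤ) : ℚ) := by
  conv_rhs => rw [← Finset.univ_sum_single z]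
  rw [map_sum]
  unfold extendQ qcast
  simp only [LinearMap.sum_apply, LinearMap.smul_apply, LinearMap.proj_apply, smul_eq_mul]
  push_cast
  apply Finset.sum_congr rfl
  intro j _
  have : (Pi.single j (z j) : Fin n → ℤ) = (z j) • (Pi.single j 1 : Fin n → ℤ) := by
    ext i
    by_cases h : i = j
    · subst h; simp
    · simp [Pi.single_apply, h]
  rw [this, map_smul, smul_eq_mul]
  push_cast
  ring

/-- `qcast` as a `ℤ`-linear map. -/
def qcastL (n : ℕ) : (Fin n → ℤ) →ₗ[ℤ] (Fin n → ℚ) where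
  toFun := qcast
  map_add' x y := by funext j; simp [qcast]
  map_smul' c x := by funext j; simp [qcast]

theorem qcast_injective (n : ℕ) : Function.Injective (qcast (n := n)) := by
  intro x y h
  funext j
  have := congrFun h j
  simp only [qcast] at this
  exact_mod_cast this

/-- Clearing denominators. -/
theorem exists_int_multiple {n : ℕ} (y : Fin n → ℚ) :
    ∃ (N : ℤ) (z : Fin n → ℤ), N ≠ 0 ∧ qcast z = (N : ℚ) • y := by
  classical
  obtain ⟨b, hb⟩ := IsLocalization.exist_integer_multiples_of_finset (nonZeroDivisors ℤ)
    (Finset.univ.image y ∪ {0})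
  have hint : ∀ j : Fin n, ∃ z : ℤ, ((z : ℚ)) = (b : ℤ) • y j := by
    intro j
    have hy : y j ∈ Finset.univ.image y ∪ {0} :=
      Finset.mem_union_left _ (Finset.mem_image_of_mem y (Finset.mem_univ j))
    obtain ⟨z, hz⟩ := hb (y j) hy
    exact ⟨z, by simpa [Algebra.smul_def] using hz⟩
  choose z hz using hint
  refine ⟨(b : ℤ), z, nonZeroDivisors.coe_ne_zero b, ?_⟩
  funext j
  have := hz j
  simpa [qcast, zsmul_eq_mul] using this

theorem lattice_basis {n t : ℕ} (T : Submodule ℚ (Fin n → ℚ)) (hT : finrank ℚ T = t) :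
    ∃ (x : Fin t → (Fin n → ℤ)) (ψ : Fin t → ((Fin n → ℤ) →ₗ[ℤ] ℤ)),
      (∀ j, qcast (x j) ∈ T) ∧ (∀ i j, ψ i (x j) = if i = j then 1 else 0) := by
  classical
  set Z : Submodule ℤ (Fin n → ℤ) := Submodule.comap (qcastL n) (T.restrictScalars ℤ) with hZ
  have hZmem : ∀ v : Fin n → ℤ, v ∈ Z ↔ qcast v ∈ T := fun v => Iff.rfl
  -- quotient is torsion-free, hence free, hence mkQ splits
  haveI : NoZeroSMulDivisors ℤ ((Fin n → ℤ) ⧸ Z) := by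
    constructor
    intro c q hcq
    rcases eq_or_ne c 0 with rfl | hc
    · exact Or.inl rfl
    right
    obtain ⟨x, rfl⟩ := Submodule.Quotient.mk_surjective Z q
    rw [← Submodule.Quotient.mk_smul, Submodule.Quotient.mk_eq_zero] at hcq
    rw [Submodule.Quotient.mk_eq_zero]
    rw [hZmem] at hcq ⊢
    have : qcast (c • x) = (c : ℚ) • qcast x := by
      funext j; simp [qcast]
    rw [this] at hcq
    have := T.smul_mem ((c : ℚ))⁻¹ hcq
    rwa [smul_smul, inv_mul_cancel₀ (by exact_mod_cast hc), one_smul] at this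
  obtain ⟨σ, hσ⟩ := Module.projective_lifting_property Z.mkQ
    (LinearMap.id : ((Fin n → ℤ) ⧸ Z) →ₗ[ℤ] ((Fin n → ℤ) ⧸ Z))
    (Submodule.Quotient.mk_surjective Z)
  set p : (Fin n → ℤ) →ₗ[ℤ] (Fin n → ℤ) := LinearMap.id - σ ∘ₗ Z.mkQ with hp
  have hpZ : ∀ v, p v ∈ Z := by
    intro v
    have : Z.mkQ (p v) = 0 := by
      simp only [hp, map_sub, LinearMap.sub_apply, LinearMap.id_apply, LinearMap.comp_apply]
      have := congrFun (congrArg DFunLike.coe hσ) (Z.mkQ v)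
      simp only [LinearMap.comp_apply, LinearMap.id_apply] at this
      rw [this, sub_self]
    rwa [← Submodule.Quotient.mk_eq_zero]
  have hpfix : ∀ v ∈ Z, p v = v := by
    intro v hv
    simp only [hp, LinearMap.sub_apply, LinearMap.id_apply, LinearMap.comp_apply]
    have h0 : Z.mkQ v = 0 := by
      rw [Submodule.mkQ_apply, Submodule.Quotient.mk_eq_zero]; exact hv
    rw [h0, map_zero, sub_zero]
  set π : (Fin n → ℤ) →ₗ[ℤ] Z := p.codRestrict Z hpZ with hπ
  -- basis of Z
  obtain ⟨r, b⟩ := Submodule.basisOfPid (Pi.basisFun ℤ (Fin n)) Z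
  -- the images in ℚ^n
  set c : Fin r → (Fin n → ℚ) := fun i => qcast ((b i : Fin n → ℤ)) with hc
  have hcT : ∀ i, c i ∈ T := fun i => (hZmem _).1 (b i).2
  have hcli : LinearIndependent ℚ c := by
    rw [← LinearIndependent.iff_fractionRing ℤ ℚ]
    have hbli : LinearIndependent ℤ (fun i => ((b i : Fin n → ℤ))) :=
      b.linearIndependent.map' Z.subtype (Submodule.ker_subtype Z)
    have : c = (qcastL n) ∘ (fun i => ((b i : Fin n → ℤ))) := rfl
    rw [this]
    apply hbli.map' (qcastL n)
    rw [LinearMap.ker_eq_bot]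
    exact qcast_injective n
  have hspan : Submodule.span ℚ (Set.range c) = T := by
    apply le_antisymm
    · rw [Submodule.span_le]
      rintro _ ⟨i, rfl⟩
      exact hcT i
    · intro y hy
      obtain ⟨N, z, hN, hz⟩ := exists_int_multiple y
      have hzZ : z ∈ Z := by
        rw [hZmem, hz]
        exact T.smul_mem _ hy
      have hzspan : qcast z ∈ Submodule.span ℚ (Set.range c) := by
        have hrepr := b.sum_repr ⟨z, hzZ⟩
        have : z = ∑ i, (b.repr ⟨z, hzZ⟩ i) • ((b i : Fin n → ℤ)) := by
          have := congrArg (Submodule.subtype Z) hrepr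
          rw [map_sum] at this
          simp only [map_smul, Submodule.subtype_apply] at this
          exact this.symm
        rw [this]
        have : qcast (∑ i, (b.repr ⟨z, hzZ⟩ i) • ((b i : Fin n → ℤ)))
            = ∑ i, ((b.repr ⟨z, hzZ⟩ i : ℤ) : ℚ) • c i := by
          rw [show qcast (∑ i, (b.repr ⟨z, hzZ⟩ i) • ((b i : Fin n → ℤ)))
              = (qcastL n) (∑ i, (b.repr ⟨z, hzZ⟩ i) • ((b i : Fin n → ℤ))) from rfl]
          rw [map_sum]
          apply Finset.sum_congr rfl
          intro i _
          rw [map_smul]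
          funext j
          simp [qcastL, qcast, hc]
        rw [this]
        exact Submodule.sum_mem _ fun i _ =>
          Submodule.smul_mem _ _ (Submodule.subset_span ⟨i, rfl⟩)
      have : y = ((N : ℚ))⁻¹ • qcast z := by
        rw [hz, smul_smul, inv_mul_cancel₀ (by exact_mod_cast hN), one_smul]
      rw [this]
      exact Submodule.smul_mem _ _ hzspan
  have hrt : r = t := by
    have := finrank_span_eq_card hcli
    rw [hspan, hT] at this
    simpa using this.symm
  subst hrt
  refine ⟨fun i => ((b i : Fin n → ℤ)), fun i => (b.coord i) ∘ₗ π, fun j => hcT j, ?_⟩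
  intro i j
  have hπb : π ((b j : Fin n → ℤ)) = b j := by
    apply Subtype.ext
    show p _ = _
    exact hpfix _ (b j).2
  simp only [LinearMap.comp_apply, hπb, Basis.coord_apply, Basis.repr_self]
  by_cases hij : i = j <;> simp [hij, Finsupp.single_apply, eq_comm]

/-- Lemma 3.11 for `i = 1` — extending an isotropic unimodular
family in `H_k` by standard-like vectors in higher filtration. -/
theorem stmt13 (g k s : ℕ) (hk1 : 1 ≤ k) (hk5 : k ≤ 5) (hs : s + k + 1 ≤ g)
    (w : Fin (s + 1) → Fin (2 * g) → ℤ)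
    (hwH : ∀ i, w i ∈ coordZero ℤ (2 * g) (2 * (k - 1)))
    (horth : ∀ i j, i ≠ j → symp (w i) (w j) = 0)
    (hgcd : IsUnimodular w) :
    ∃ x : Fin (g - 2 - s) → Fin (2 * g) → ℤ,
      (∀ j : Fin (g - 2 - s), (j : ℕ) < k - 1 → x j = stdA ℤ g (j : ℕ)) ∧
      (∀ j : Fin (g - 2 - s), k - 1 ≤ (j : ℕ) → x j ∈ coordZero ℤ (2 * g) (2 * k)) ∧
      (∀ i j, i ≠ j → symp (Fin.append w x i) (Fin.append w x j) = 0) ∧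
      IsUnimodular (Fin.append w x) := by
  classical
  obtain ⟨φ, hφ⟩ := dual_of_unimodular w hgcd
  set t := g - s - k - 1 with ht
  -- the constraint functionals
  set f : (Fin (2 * k) ⊕ Fin (s + 1) ⊕ Fin (s + 1)) → ((Fin (2 * g) → ℚ) →ₗ[ℚ] ℚ) :=
    fun i => Sum.rec
      (fun j => LinearMap.proj (⟨(j : ℕ), by omega⟩ : Fin (2 * g)))
      (Sum.rec (fun i => sympL (qcast (w i))) (fun i => extendQ (φ i))) i with hfdef
  set V₀ : Submodule ℚ (Fin (2 * g) → ℚ) := LinearMap.ker (LinearMap.pi f) with hV₀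
  have hV₀mem : ∀ y, y ∈ V₀ ↔ ∀ i, f i y = 0 := by
    intro y
    rw [hV₀, LinearMap.mem_ker]
    constructor
    · intro h i; exact congrFun h i
    · intro h; funext i; exact h i
  have hV₀rk : 2 * t ≤ finrank ℚ V₀ := by
    have h1 := finrank_ker_pi f
    have h2 : finrank ℚ (Fin (2 * g) → ℚ) = 2 * g := by
      simp [Module.finrank_pi]
    rw [h2] at h1
    simp only [Fintype.card_sum, Fintype.card_fin] at h1
    rw [← hV₀] at h1
    omega
  obtain ⟨T, hTV₀, hTrk, hTiso⟩ := exists_isotropic t V₀ hV₀rk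
  obtain ⟨x', ψ, hx'T, hψ⟩ := lattice_basis T hTrk
  -- derived facts about x'
  have hx'V₀ : ∀ q, qcast (x' q) ∈ V₀ := fun q => hTV₀ (hx'T q)
  have hx'coord : ∀ q (idx : Fin (2 * g)), (idx : ℕ) < 2 * k → x' q idx = 0 := by
    intro q idx hidx
    have := (hV₀mem _).1 (hx'V₀ q) (Sum.inl ⟨(idx : ℕ), hidx⟩)
    simp only [hfdef, LinearMap.proj_apply] at this
    have h2 : (⟨(idx : ℕ), by omega⟩ : Fin (2 * g)) = idx := by
      apply Fin.ext; rfl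
    rw [h2] at this
    simp only [qcast] at this
    exact_mod_cast this
  have hswx : ∀ i q, symp (w i) (x' q) = 0 := by
    intro i q
    have := (hV₀mem _).1 (hx'V₀ q) (Sum.inr (Sum.inl i))
    simp only [hfdef, sympL_apply] at this
    rw [symp_qcast] at this
    exact_mod_cast this
  have hφx : ∀ i q, φ i (x' q) = 0 := by
    intro i q
    have := (hV₀mem _).1 (hx'V₀ q) (Sum.inr (Sum.inr i))
    simp only [hfdef] at this
    rw [extendQ_qcast] at this
    exact_mod_cast this
  have hsxx : ∀ q q', symp (x' q) (x' q') = 0 := by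
    intro q q'
    have := hTiso _ (hx'T q) _ (hx'T q')
    rw [symp_qcast] at this
    exact_mod_cast this
  have hkg : k ≤ g := by omega
  set m₂ := g - 2 - s with hm₂
  have hq : ∀ j : Fin m₂, ¬((j : ℕ) < k - 1) → (j : ℕ) - (k - 1) < t := by
    intro j hj
    have := j.2
    omega
  set x : Fin m₂ → Fin (2 * g) → ℤ :=
    fun j => if h : (j : ℕ) < k - 1 then stdA ℤ g (j : ℕ)
      else x' ⟨(j : ℕ) - (k - 1), hq j h⟩ with hxdef
  set coordL : Fin (k - 1) → ((Fin (2 * g) → ℤ) →ₗ[ℤ] ℤ) :=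
    fun l => LinearMap.proj (⟨2 * l.1, by have := l.2; omega⟩ : Fin (2 * g)) with hcoordLdef
  have hcw : ∀ (l : Fin (k - 1)) i, coordL l (w i) = 0 := by
    intro l i
    have hl := l.2
    exact hwH i ⟨2 * l.1, by omega⟩ (by simp only [Fin.val_mk]; omega)
  have hca : ∀ (l : Fin (k - 1)) (l' : ℕ), coordL l (stdA ℤ g l') = if l.1 = l' then 1 else 0 := by
    intro l l'
    show stdA ℤ g l' _ = _
    unfold stdA
    by_cases h : l.1 = l' <;> simp [h]
  have hcx : ∀ (l : Fin (k - 1)) q, coordL l (x' q) = 0 := by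
    intro l q
    exact hx'coord q _ (by have := l.2; simp; omega)
  set φ'' : Fin (s + 1) → ((Fin (2 * g) → ℤ) →ₗ[ℤ] ℤ) :=
    fun i => φ i - ∑ l : Fin (k - 1), (φ i (stdA ℤ g l.1)) • coordL l with hφ''def
  have hφ''eval : ∀ i v, φ'' i v = φ i v - ∑ l : Fin (k - 1), φ i (stdA ℤ g l.1) * coordL l v := by
    intro i v
    simp [hφ''def, LinearMap.sub_apply, LinearMap.sum_apply, LinearMap.smul_apply, smul_eq_mul]
  have hφ''w : ∀ i j, φ'' i (w j) = if i = j then 1 else 0 := by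
    intro i j
    rw [hφ''eval]
    simp [hcw, hφ]
  have hφ''a : ∀ i (l' : ℕ), l' < k - 1 → φ'' i (stdA ℤ g l') = 0 := by
    intro i l' h
    rw [hφ''eval]
    rw [Finset.sum_eq_single (⟨l', h⟩ : Fin (k - 1))]
    · simp [hca]
    · intro l _ hl
      rw [hca]
      have : ¬ (l.1 = l') := fun hh => hl (Fin.ext hh)
      simp [this]
    · simp
  have hφ''x : ∀ i q, φ'' i (x' q) = 0 := by
    intro i q
    rw [hφ''eval]
    simp [hφx, hcx]
  set ψ' : Fin t → ((Fin (2 * g) → ℤ) →ₗ[ℤ] ℤ) :=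
    fun q => ψ q - (∑ i, (ψ q (w i)) • φ'' i)
      - (∑ l : Fin (k - 1), (ψ q (stdA ℤ g l.1)) • coordL l) with hψ'def
  have hψ'eval : ∀ q v, ψ' q v = ψ q v - (∑ i, ψ q (w i) * φ'' i v)
      - (∑ l : Fin (k - 1), ψ q (stdA ℤ g l.1) * coordL l v) := by
    intro q v
    simp [hψ'def, LinearMap.sub_apply, LinearMap.sum_apply, LinearMap.smul_apply, smul_eq_mul]
  have hψ'w : ∀ q j, ψ' q (w j) = 0 := by
    intro q j
    rw [hψ'eval]
    simp only [hφ''w, hcw, mul_ite, mul_one, mul_zero]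
    rw [Finset.sum_ite_eq' Finset.univ j (fun i => ψ q (w i))]
    simp
  have hψ'a : ∀ q (l' : ℕ), l' < k - 1 → ψ' q (stdA ℤ g l') = 0 := by
    intro q l' h
    rw [hψ'eval]
    simp only [hφ''a _ _ h, hca, mul_ite, mul_one, mul_zero]
    rw [Finset.sum_eq_single (⟨l', h⟩ : Fin (k - 1))]
    · simp
    · intro l _ hl
      have : ¬ (l.1 = l') := fun hh => hl (Fin.ext hh)
      simp [this]
    · simp
  have hψ'x : ∀ q q', ψ' q (x' q') = if q = q' then 1 else 0 := by
    intro q q'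
    rw [hψ'eval]
    simp [hφ''x, hcx, hψ]
  -- symp facts
  have hsaw : ∀ (l : ℕ), l < k - 1 → ∀ i, symp (stdA ℤ g l) (w i) = 0 := by
    intro l hl i
    rw [symp_stdA_left l (by omega)]
    exact hwH i _ (by simp; omega)
  have hsax : ∀ (l : ℕ), l < k - 1 → ∀ q, symp (stdA ℤ g l) (x' q) = 0 := by
    intro l hl q
    rw [symp_stdA_left l (by omega)]
    exact hx'coord q _ (by simp; omega)
  have hsaa : ∀ (l l' : ℕ), l < k - 1 → symp (stdA ℤ g l) (stdA ℤ g l') = 0 := by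
    intro l l' hl
    rw [symp_stdA_left l (by omega)]
    show (if _ = _ then _ else _) = (0 : ℤ)
    rw [if_neg (by simp; omega)]
  have hswx2 : ∀ i₁ (j₂ : Fin m₂), symp (w i₁) (x j₂) = 0 := by
    intro i₁ j₂
    simp only [hxdef]
    by_cases h : (j₂ : ℕ) < k - 1
    · rw [dif_pos h, symp_neg_swap, hsaw _ h, neg_zero]
    · rw [dif_neg h]
      exact hswx i₁ _
  have hsxx2 : ∀ (j₂ j₂' : Fin m₂), symp (x j₂) (x j₂') = 0 := by
    intro j₂ j₂'
    simp only [hxdef]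
    by_cases h : (j₂ : ℕ) < k - 1 <;> by_cases h' : (j₂' : ℕ) < k - 1
    · rw [dif_pos h, dif_pos h']
      exact hsaa _ _ h
    · rw [dif_pos h, dif_neg h']
      exact hsax _ h _
    · rw [dif_neg h, dif_pos h']
      rw [symp_neg_swap, hsax _ h', neg_zero]
    · rw [dif_neg h, dif_neg h']
      exact hsxx _ _
  -- decomposition of appended families
  have happ : ∀ {α : Type} (u : Fin (s + 1) → α) (v : Fin m₂ → α) (i : Fin (s + 1 + m₂)),
      (∃ i₁ : Fin (s + 1), Fin.append u v i = u i₁ ∧ (i : ℕ) = (i₁ : ℕ)) ∨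
      (∃ i₂ : Fin m₂, Fin.append u v i = v i₂ ∧ (i : ℕ) = s + 1 + (i₂ : ℕ)) := by
    intro α u v i
    rcases lt_or_ge (i : ℕ) (s + 1) with h | h
    · left
      refine ⟨⟨(i : ℕ), h⟩, ?_, rfl⟩
      conv_lhs => rw [show i = Fin.castAdd m₂ ⟨(i : ℕ), h⟩ from Fin.ext rfl]
      exact Fin.append_left u v _
    · right
      have h2 := i.2
      refine ⟨⟨(i : ℕ) - (s + 1), by omega⟩, ?_, by simp only [Fin.val_mk]; omega⟩
      conv_lhs => rw [show i = Fin.natAdd (s + 1) ⟨(i : ℕ) - (s + 1), by omega⟩ from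
        Fin.ext (by simp only [Fin.natAdd_mk, Fin.val_mk]; omega)]
      exact Fin.append_right u v _
  set χ : Fin m₂ → ((Fin (2 * g) → ℤ) →ₗ[ℤ] ℤ) :=
    fun j => if h : (j : ℕ) < k - 1 then coordL ⟨(j : ℕ), h⟩
      else ψ' ⟨(j : ℕ) - (k - 1), hq j h⟩ with hχdef
  refine ⟨x, ?_, ?_, ?_, ?_⟩
  · intro j hj
    simp only [hxdef]
    rw [dif_pos hj]
  · intro j hj
    intro idx hidx
    simp only [hxdef]
    rw [dif_neg (by omega)]
    exact hx'coord _ idx hidx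
  · intro i j hij
    rcases happ w x i with ⟨i₁, hi, hiv⟩ | ⟨i₂, hi, hiv⟩ <;>
      rcases happ w x j with ⟨j₁, hj, hjv⟩ | ⟨j₂, hj, hjv⟩
    · rw [hi, hj]
      apply horth
      intro hee
      exact hij (Fin.ext (by rw [hiv, hjv, hee]))
    · rw [hi, hj]; exact hswx2 _ _
    · rw [hi, hj, symp_neg_swap, hswx2 _ _, neg_zero]
    · rw [hi, hj]; exact hsxx2 _ _
  · apply unimodular_of_dual _ (Fin.append φ'' χ)
    intro i j
    rcases happ φ'' χ i with ⟨i₁, hi, hiv⟩ | ⟨i₂, hi, hiv⟩ <;>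
      rcases happ w x j with ⟨j₁, hj, hjv⟩ | ⟨j₂, hj, hjv⟩
    · rw [hi, hj, hφ''w]
      apply if_congr _ rfl rfl
      rw [Fin.ext_iff, Fin.ext_iff]
      omega
    · rw [hi, hj, if_neg (by intro he; rw [Fin.ext_iff] at he; omega)]
      simp only [hxdef]
      by_cases h : (j₂ : ℕ) < k - 1
      · rw [dif_pos h]
        exact hφ''a _ _ h
      · rw [dif_neg h]
        exact hφ''x _ _
    · rw [hi, hj, if_neg (by intro he; rw [Fin.ext_iff] at he; omega)]
      simp only [hχdef]
      by_cases h : (i₂ : ℕ) < k - 1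
      · rw [dif_pos h]
        exact hcw _ _
      · rw [dif_neg h]
        exact hψ'w _ _
    · rw [hi, hj]
      simp only [hχdef, hxdef]
      by_cases h : (i₂ : ℕ) < k - 1 <;> by_cases h' : (j₂ : ℕ) < k - 1
      · rw [dif_pos h, dif_pos h', hca]
        apply if_congr _ rfl rfl
        rw [Fin.ext_iff]
        simp only [Fin.val_mk]
        omega
      · rw [dif_pos h, dif_neg h', hcx]
        rw [if_neg (by intro he; rw [Fin.ext_iff] at he; omega)]
      · rw [dif_neg h, dif_pos h']
        rw [hψ'a _ _ h']
        rw [if_neg (by intro he; rw [Fin.ext_iff] at he; omega)]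
      · rw [dif_neg h, dif_neg h', hψ'x]
        apply if_congr _ rfl rfl
        rw [Fin.ext_iff, Fin.ext_iff]
        simp only [Fin.val_mk]
        omega

end Paper
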